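/- Let α ∈ (1.26, 1.71), λ ≥ 0, h > 0, let k ≥ 5 be an integer, and let γ₄ be real with γ₄ ≥ (α⁵/8 + α⁴/3 − 67α³/24 − 23α²/6 + 175α/6 − 30)/(α³+6α²+11α+6). Then the third-order tempered-WSGD weight g_{k,λ} = (γ₁ω_k^(α) + γ₂ω_{k−1}^(α) + γ₃ω_{k−2}^(α) + γ₄ω_{k−3}^(α))e^{−(k−1)hλ} satisfies g_{k,λ} ≥ 0. -/

import Mathlib

set_option maxHeartbeats 800000

/-- for `α ∈ (1.26, 1.71)`, `k ≥ 5` and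
`γ₄ ≥ (α⁵/8 + α⁴/3 − 67α³/24 − 23α²/6 + 175α/6 − 30)/(α³+6α²+11α+6)`, the weight
`g_k = (γ₁ω_k + γ₂ω_{k−1} + γ₃ω_{k−2} + γ₄ω_{k−3})e^{−(k−1)hλ}` is nonnegative. -/
theorem third_order_weights_gk_nonneg
    (α lam h γ₁ γ₂ γ₃ γ₄ : ℝ) (hα1 : 1.26 < α) (hα2 : α < 1.71)
    (hlam : 0 ≤ lam) (hh : 0 < h)
    (k : ℕ) (hk : 5 ≤ k)
    (hγ₄ : (α ^ 5 / 8 + α ^ 4 / 3 - 67 * α ^ 3 / 24 - 23 * α ^ 2 / 6 + 175 * α / 6 - 30) /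
        (α ^ 3 + 6 * α ^ 2 + 11 * α + 6) ≤ γ₄)
    (hγ₁ : γ₁ = α ^ 2 / 8 + 5 * α / 24 - γ₄)
    (hγ₂ : γ₂ = -α ^ 2 / 4 + α / 12 + 1 + 3 * γ₄)
    (hγ₃ : γ₃ = α ^ 2 / 8 - 7 * α / 24 - 3 * γ₄)
    (ω : ℕ → ℝ)
    (hω : ∀ j : ℕ, ω j =
      (-1 : ℝ) ^ j * (∏ i ∈ Finset.range j, (α - (i : ℝ))) / (Nat.factorial j : ℝ))
    (gk : ℝ)
    (hgk : gk = (γ₁ * ω k + γ₂ * ω (k - 1) + γ₃ * ω (k - 2) + γ₄ * ω (k - 3)) *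
        Real.exp (-((k : ℝ) - 1) * h * lam)) :
    0 ≤ gk := by
  have h126 : (1.26 : ℝ) = 63/50 := by norm_num
  have h171 : (1.71 : ℝ) = 171/100 := by norm_num
  rw [h126] at hα1
  rw [h171] at hα2
  -- recurrence for ω, multiplied-out form
  have recw : ∀ j : ℕ, ((j : ℝ) + 1) * ω (j + 1) = ω j * ((j : ℝ) - α) := by
    intro j
    have hf : (Nat.factorial j : ℝ) ≠ 0 := by
      exact_mod_cast Nat.factorial_ne_zero j
    have hj1 : ((j : ℝ) + 1) ≠ 0 := by positivity
    rw [hω, hω, Finset.prod_range_succ, Nat.factorial_succ]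
    push_cast
    field_simp
    ring
  -- positivity of ω (n+2)
  have pos : ∀ n : ℕ, 0 < ω (n + 2) := by
    intro n
    induction n with
    | zero =>
      rw [hω]
      norm_num [Finset.prod_range_succ, Nat.factorial]
      nlinarith
    | succ m ih =>
      have hrec := recw (m + 2)
      have h1 : (0:ℝ) < ((m + 2 : ℕ) : ℝ) - α := by push_cast; nlinarith [Nat.cast_nonneg (α := ℝ) m]
      have h2 : (0 : ℝ) < ((m + 2 : ℕ) : ℝ) + 1 := by positivity
      have h3 : 0 < ω (m + 2) * (((m + 2 : ℕ) : ℝ) - α) := mul_pos ih h1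
      rw [← hrec] at h3
      rw [show m + 1 + 2 = m + 2 + 1 from rfl]
      nlinarith [h3, h2]
  obtain ⟨n, rfl⟩ : ∃ n, k = n + 5 := ⟨k - 5, by omega⟩
  have e1 : n + 5 - 1 = n + 4 := by omega
  have e2 : n + 5 - 2 = n + 3 := by omega
  have e3 : n + 5 - 3 = n + 2 := by omega
  rw [e1, e2, e3] at hgk
  have r3 := recw (n + 2)
  have r4 := recw (n + 3)
  have r5 := recw (n + 4)
  push_cast at r3 r4 r5
  have hn : (0 : ℝ) ≤ (n : ℝ) := Nat.cast_nonneg n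
  set x : ℝ := (n : ℝ) with hx
  set T : ℝ := γ₄ * (x + 3) * (x + 4) * (x + 5) + γ₃ * (x + 2 - α) * (x + 4) * (x + 5)
      + γ₂ * (x + 2 - α) * (x + 3 - α) * (x + 5)
      + γ₁ * (x + 2 - α) * (x + 3 - α) * (x + 4 - α) with hT
  have hD : (0 : ℝ) < α ^ 3 + 6 * α ^ 2 + 11 * α + 6 := by nlinarith
  have hN : α ^ 5 / 8 + α ^ 4 / 3 - 67 * α ^ 3 / 24 - 23 * α ^ 2 / 6 + 175 * α / 6 - 30
      ≤ γ₄ * (α ^ 3 + 6 * α ^ 2 + 11 * α + 6) := (div_le_iff₀ hD).mp hγ₄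
  have hc : (0 : ℝ) ≤ 31 - 217 * α / 12 - 9 * α ^ 2 / 8 + 13 * α ^ 3 / 12 + α ^ 4 / 8 := by
    have key : 31 - 217 * α / 12 - 9 * α ^ 2 / 8 + 13 * α ^ 3 / 12 + α ^ 4 / 8
        = 445554161/50000000 - 5534417/375000 * (α - 63/50) + 41607/10000 * (α - 63/50) ^ 2
          + 257/150 * (α - 63/50) ^ 3 + 1/8 * (α - 63/50) ^ 4 := by ring
    have hu0 : (0 : ℝ) ≤ α - 63/50 := by linarith
    have hu1 : α - 63/50 ≤ 9/20 := by linarith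
    have hA : (5534417/375000 : ℝ) * (α - 63/50) ≤ 5534417/375000 * (9/20) := by
      apply mul_le_mul_of_nonneg_left hu1; norm_num
    have hB : (0:ℝ) ≤ (α - 63/50) ^ 2 := sq_nonneg _
    have hC : (0:ℝ) ≤ (α - 63/50) ^ 3 := pow_nonneg hu0 _
    have hE : (0:ℝ) ≤ (α - 63/50) ^ 4 := pow_nonneg hu0 _
    rw [key]
    linarith
  have hb : (0 : ℝ) ≤ 10 - (α ^ 2 + 5 * α) / 2 := by
    have hp : (0:ℝ) ≤ (α - 63/50) * (171/100 - α) := le_of_lt (mul_pos (by linarith) (by linarith))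
    have key2 : 10 - (α ^ 2 + 5 * α) / 2
        = (1/2) * ((α - 63/50) * (171/100 - α)) + (110773/10000 - 797/200 * α) := by ring
    rw [key2]
    linarith
  have hQ : (0 : ℝ) ≤ x ^ 2 + (10 - (α ^ 2 + 5 * α) / 2) * x
      + (31 - 217 * α / 12 - 9 * α ^ 2 / 8 + 13 * α ^ 3 / 12 + α ^ 4 / 8) :=
    add_nonneg (add_nonneg (sq_nonneg x) (mul_nonneg hb hn)) hc
  have hTsplit : T = (γ₄ * (α ^ 3 + 6 * α ^ 2 + 11 * α + 6)
        - (α ^ 5 / 8 + α ^ 4 / 3 - 67 * α ^ 3 / 24 - 23 * α ^ 2 / 6 + 175 * α / 6 - 30))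
      + x * (x ^ 2 + (10 - (α ^ 2 + 5 * α) / 2) * x
        + (31 - 217 * α / 12 - 9 * α ^ 2 / 8 + 13 * α ^ 3 / 12 + α ^ 4 / 8)) := by
    rw [hT, hγ₁, hγ₂, hγ₃]; ring
  have hTnonneg : 0 ≤ T := by
    rw [hTsplit]
    have := mul_nonneg hn hQ
    linarith
  have hd : (0 : ℝ) < (x + 3) * (x + 4) * (x + 5) := by positivity
  have hS : (γ₁ * ω (n + 5) + γ₂ * ω (n + 4) + γ₃ * ω (n + 3) + γ₄ * ω (n + 2))
      * ((x + 3) * (x + 4) * (x + 5)) = ω (n + 2) * T := by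
    rw [hT]
    linear_combination γ₁ * ((x + 3) * (x + 4) * r5 + (x + 3) * (x + 4 - α) * r4
        + (x + 3 - α) * (x + 4 - α) * r3)
      + γ₂ * ((x + 3) * (x + 5) * r4 + (x + 3 - α) * (x + 5) * r3)
      + γ₃ * ((x + 4) * (x + 5) * r3)
  have hSnn : 0 ≤ γ₁ * ω (n + 5) + γ₂ * ω (n + 4) + γ₃ * ω (n + 3) + γ₄ * ω (n + 2) := by
    have heq : γ₁ * ω (n + 5) + γ₂ * ω (n + 4) + γ₃ * ω (n + 3) + γ₄ * ω (n + 2)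
        = ω (n + 2) * T / ((x + 3) * (x + 4) * (x + 5)) := (eq_div_iff hd.ne').mpr hS
    rw [heq]
    exact div_nonneg (mul_nonneg (pos n).le hTnonneg) hd.le
  rw [hgk]
  exact mul_nonneg hSnn (Real.exp_nonneg _)
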